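/- arXiv:2010.08195 — 5 statements merged into one kernel-verified Lean document; each statement's English description precedes it below -/
import Mathlib

section
/- Let μ be a non-negative Radon (locally finite) measure on [0,∞), α > 0 and h₀ ∈ ℝ. Then the function H(t) = h₀ e^{-αt} + ∫_{(0,t]} e^{-α(t-s)} μ(ds) is the unique càdlàg solution of the measure-driven differential equation dH(t) = -α H(t) dt + μ(dt) with H(0) = h₀; i.e., for all t ≥ 0, H(t) = h₀ - α ∫_0^t H(s) ds + μ((0,t]), and any càdlàg H satisfying this identity equals the above formula. -/
open MeasureTheory Set Filter

lemma meas_of_rightCont (g : ℝ → ℝ) (hg : ∀ t : ℝ, ContinuousWithinAt g (Ici t) t) :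
    Measurable g := by
  set q : ℕ → ℝ → ℝ := fun n x => (⌈x * 2^n⌉ : ℤ) / 2^n with hq
  have hqmono : ∀ n, Monotone (q n) := by
    intro n a b hab
    have h1 : (⌈a * 2^n⌉ : ℤ) ≤ ⌈b * 2^n⌉ :=
      Int.ceil_le_ceil (by nlinarith [pow_pos (by norm_num : (0:ℝ) < 2) n])
    have : ((⌈a * 2^n⌉ : ℤ) : ℝ) ≤ ((⌈b * 2^n⌉ : ℤ) : ℝ) := by exact_mod_cast h1
    simp only [hq]
    exact div_le_div_of_nonneg_right this (by positivity) |>.trans_eq rfl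
  have hrange : ∀ n, (range (q n)).Countable := by
    intro n
    have : range (q n) ⊆ (fun k : ℤ => (k : ℝ) / 2^n) '' univ := by
      rintro x ⟨y, rfl⟩; exact ⟨⌈y * 2^n⌉, trivial, rfl⟩
    exact (Set.countable_univ.image _).mono this
  have hmeasn : ∀ n, Measurable (fun x => g (q n x)) := by
    intro n
    intro A hA
    have : (fun x => g (q n x)) ⁻¹' A = q n ⁻¹' (g ⁻¹' A) := rfl
    rw [this]
    have : q n ⁻¹' (g ⁻¹' A) = ⋃ r ∈ (g ⁻¹' A) ∩ range (q n), q n ⁻¹' {r} := by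
      ext x; simp only [mem_preimage, mem_iUnion, mem_inter_iff, mem_range, mem_singleton_iff]
      constructor
      · intro h; exact ⟨q n x, ⟨h, ⟨x, rfl⟩⟩, rfl⟩
      · rintro ⟨r, ⟨hr, _⟩, rfl⟩; exact hr
    rw [this]
    refine MeasurableSet.biUnion (((hrange n).mono (inter_subset_right))) ?_
    intro r _
    have : OrdConnected (q n ⁻¹' {r}) := by
      constructor
      rintro x hx y hy z hz
      simp only [mem_preimage, mem_singleton_iff] at *
      exact le_antisymm (hy ▸ hqmono n hz.2) (hx ▸ hqmono n hz.1)
    exact this.measurableSet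
  refine measurable_of_tendsto_metrizable hmeasn ?_
  rw [tendsto_pi_nhds]
  intro x
  have hge : ∀ n, x ≤ q n x := by
    intro n
    rw [hq]
    rw [le_div_iff₀ (by positivity)]
    exact Int.le_ceil _
  have hto : Tendsto (fun n => q n x) atTop (nhds x) := by
    have hub : ∀ n, q n x ≤ x + 1 / 2^n := by
      intro n
      rw [hq, div_le_iff₀ (by positivity : (0:ℝ) < 2^n)]
      have := Int.ceil_lt_add_one (x * 2^n)
      calc ((⌈x * 2^n⌉ : ℤ) : ℝ) ≤ x * 2^n + 1 := by linarith
        _ = (x + 1/2^n) * 2^n := by field_simp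
    have h0 : Tendsto (fun n : ℕ => (1:ℝ) / 2^n) atTop (nhds 0) := by
      simpa [one_div, inv_pow] using tendsto_pow_atTop_nhds_zero_of_lt_one
        (by norm_num : (0:ℝ) ≤ 1/2) (by norm_num : (1:ℝ)/2 < 1) |>.congr (fun n => by
          rw [div_pow]; norm_num)
    have h1 : Tendsto (fun n : ℕ => x + 1 / 2^n) atTop (nhds (x + 0)) :=
      tendsto_const_nhds.add h0
    rw [add_zero] at h1
    exact tendsto_of_tendsto_of_tendsto_of_le_of_le tendsto_const_nhds h1 hge hub
  have := (hg x).tendsto.comp (tendsto_nhdsWithin_iff.2 ⟨hto, Eventually.of_forall (fun n => hge n)⟩)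
  exact this

lemma exp_int (α : ℝ) (hα : 0 < α) (s t : ℝ) (hst : s ≤ t) :
    ∫ u in s..t, Real.exp (-α*(u-s)) = (1 - Real.exp (-α*(t-s)))/α := by
  have hd : ∀ u : ℝ, HasDerivAt (fun u => -Real.exp (-α*(u-s))/α) (Real.exp (-α*(u-s))) u := by
    intro u
    have h1 : HasDerivAt (fun u : ℝ => -α*(u-s)) (-α) u := by
      simpa using ((hasDerivAt_id u).sub_const s).const_mul (-α)
    have h2 := (Real.hasDerivAt_exp (-α*(u-s))).comp u h1
    have h3 := h2.div_const α
    have h4 := h3.neg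
    have e1 : (fun u => -Real.exp (-α*(u-s))/α) = -fun x => (Real.exp ∘ fun u => -α * (u - s)) x / α := by
      ext x; simp [Function.comp]; ring
    have e2 : Real.exp (-α*(u-s)) = -(Real.exp (-α * (u - s)) * -α / α) := by
      rw [mul_neg, neg_div, neg_neg, mul_div_assoc, div_self hα.ne', mul_one]
    rw [e1]
    exact h4.congr_deriv e2.symm
  rw [intervalIntegral.integral_eq_sub_of_hasDerivAt (fun u _ => hd u)
    ((Real.continuous_exp.comp (by continuity)).intervalIntegrable s t)]
  simp only [sub_self, mul_zero, neg_zero, Real.exp_zero]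
  ring

lemma key_fubini (μ : Measure ℝ) [IsLocallyFiniteMeasure μ] (α : ℝ) (hα : 0 < α)
    (t : ℝ) (ht : 0 ≤ t) :
    ∫ u in Ioc (0:ℝ) t, (∫ s in Ioc (0:ℝ) u, Real.exp (-α*(u-s)) ∂μ) =
      (μ (Ioc (0:ℝ) t)).toReal / α - (∫ s in Ioc (0:ℝ) t, Real.exp (-α*(t-s)) ∂μ) / α := by
  set A : Set ℝ := Ioc (0:ℝ) t with hA
  have hAm : MeasurableSet A := measurableSet_Ioc
  have hfin : μ A < ⊤ := lt_of_le_of_lt (measure_mono Ioc_subset_Icc_self) isCompact_Icc.measure_lt_top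
  haveI : IsFiniteMeasure (μ.restrict A) := ⟨by rwa [Measure.restrict_apply_univ]⟩
  set f : ℝ × ℝ → ENNReal := fun p =>
    ({p : ℝ × ℝ | p.2 ≤ p.1}).indicator (fun p => ENNReal.ofReal (Real.exp (-α*(p.1-p.2)))) p with hf
  have hfmeas : Measurable f := by
    apply Measurable.indicator
    · exact (ENNReal.measurable_ofReal.comp (Real.continuous_exp.comp (continuous_const.mul (continuous_fst.sub continuous_snd))).measurable)
    · exact measurableSet_le measurable_snd measurable_fst
  have hfle : ∀ p, f p ≤ 1 := by
    intro p
    by_cases hp : p ∈ {p : ℝ × ℝ | p.2 ≤ p.1}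
    · show ({p : ℝ × ℝ | p.2 ≤ p.1}).indicator _ p ≤ 1
      rw [indicator_of_mem hp, ← ENNReal.ofReal_one]
      apply ENNReal.ofReal_le_ofReal
      rw [Real.exp_le_one_iff]
      have : p.2 ≤ p.1 := hp
      nlinarith
    · show ({p : ℝ × ℝ | p.2 ≤ p.1}).indicator _ p ≤ 1
      rw [indicator_of_notMem hp]; exact zero_le_one
  -- Step 1 : rewrite inner integral
  set F : ℝ → ENNReal := fun u => ∫⁻ s in A, f (u, s) ∂μ with hF
  have step1 : ∀ u ∈ A, (∫ s in Ioc (0:ℝ) u, Real.exp (-α*(u-s)) ∂μ) = (F u).toReal := by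
    intro u hu
    have e1 : F u = ∫⁻ s in Ioc (0:ℝ) u, ENNReal.ofReal (Real.exp (-α*(u-s))) ∂μ := by
      rw [hF]
      have heq : (fun s => f (u, s)) = (Iic u).indicator
          (fun s => ENNReal.ofReal (Real.exp (-α*(u-s)))) := by
        ext s
        by_cases hs : s ≤ u
        · simp [hf, Set.indicator_apply, hs]
        · simp [hf, Set.indicator_apply, hs]
      simp only [heq]
      rw [lintegral_indicator measurableSet_Iic, Measure.restrict_restrict measurableSet_Iic]
      congr 1
      rw [hA, Iic_inter_Ioc_of_le hu.2]
    rw [e1, MeasureTheory.integral_eq_lintegral_of_nonneg_ae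
      (Eventually.of_forall (fun s => (Real.exp_pos _).le))
      (Continuous.aestronglyMeasurable (by fun_prop))]
  -- Step 3 : the swapped inner integral
  have step3 : ∀ s ∈ A, (∫⁻ u in A, f (u, s)) = ENNReal.ofReal ((1 - Real.exp (-α*(t-s)))/α) := by
    intro s hs
    have e1 : (fun u => f (u, s)) = (Ici s).indicator
        (fun u => ENNReal.ofReal (Real.exp (-α*(u-s)))) := by
      ext u
      by_cases hus : s ≤ u
      · simp [hf, Set.indicator_apply, hus]
      · simp [hf, Set.indicator_apply, hus]
    rw [e1, lintegral_indicator measurableSet_Ici, Measure.restrict_restrict measurableSet_Ici]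
    have e2 : Ici s ∩ A = Icc s t := by
      rw [hA]
      ext x
      simp only [mem_inter_iff, mem_Ici, mem_Ioc, mem_Icc]
      exact ⟨fun ⟨h1, _, h3⟩ => ⟨h1, h3⟩, fun ⟨h1, h2⟩ => ⟨h1, lt_of_lt_of_le hs.1 h1, h2⟩⟩
    rw [e2, ← ofReal_integral_eq_lintegral_ofReal]
    · congr 1
      rw [MeasureTheory.integral_Icc_eq_integral_Ioc,
        ← intervalIntegral.integral_of_le hs.2, exp_int α hα s t hs.2]
    · exact Continuous.integrableOn_Icc (by fun_prop)
    · exact Eventually.of_forall (fun u => (Real.exp_pos _).le)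
  -- assemble
  have hFmeas : Measurable F := by
    rw [hF]
    exact Measurable.lintegral_prod_right (f := fun u s => f (u, s)) hfmeas
  have hFle : ∀ u, F u ≤ μ A := by
    intro u
    calc F u ≤ ∫⁻ _ in A, 1 ∂μ := lintegral_mono (fun s => hfle _)
      _ = μ A := setLIntegral_one A
  have hinteg : Integrable (fun s => Real.exp (-α*(t-s))) (μ.restrict A) := by
    refine Integrable.mono' (integrable_const 1) (Continuous.aestronglyMeasurable (by fun_prop)) ?_
    rw [ae_restrict_iff' hAm]
    refine Eventually.of_forall (fun s hs => ?_)
    rw [Real.norm_eq_abs, abs_of_pos (Real.exp_pos _)]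
    rw [Real.exp_le_one_iff]
    have : s ≤ t := hs.2
    nlinarith
  have hinteg2 : Integrable (fun s => (1 - Real.exp (-α*(t-s)))/α) (μ.restrict A) :=
    ((integrable_const 1).sub hinteg).div_const α
  have c1 : ∫ u in Ioc (0:ℝ) t, (∫ s in Ioc (0:ℝ) u, Real.exp (-α*(u-s)) ∂μ)
      = (∫⁻ u in A, F u).toReal := by
    rw [← integral_toReal (hFmeas.aemeasurable)
      (Eventually.of_forall (fun u => lt_of_le_of_lt (hFle u) hfin))]
    exact setIntegral_congr_fun hAm step1
  have c2 : ∫⁻ u in A, F u = ∫⁻ s in A, ENNReal.ofReal ((1 - Real.exp (-α*(t-s)))/α) ∂μ := by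
    rw [hF]
    rw [lintegral_lintegral_swap (hfmeas.aemeasurable)]
    exact setLIntegral_congr_fun hAm step3
  have c3 : ∫⁻ s in A, ENNReal.ofReal ((1 - Real.exp (-α*(t-s)))/α) ∂μ
      = ENNReal.ofReal (∫ s in A, (1 - Real.exp (-α*(t-s)))/α ∂μ) := by
    rw [ofReal_integral_eq_lintegral_ofReal hinteg2]
    filter_upwards [ae_restrict_mem hAm] with s hs
    have h1 : Real.exp (-α*(t-s)) ≤ 1 := by
      rw [Real.exp_le_one_iff]
      have : s ≤ t := hs.2
      nlinarith
    show (0:ℝ) ≤ (1 - Real.exp (-α*(t-s)))/α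
    exact div_nonneg (by linarith) hα.le
  have c4 : ∫ s in A, (1 - Real.exp (-α*(t-s)))/α ∂μ
      = (μ A).toReal / α - (∫ s in A, Real.exp (-α*(t-s)) ∂μ)/α := by
    rw [integral_div, integral_sub (integrable_const 1) hinteg]
    rw [setIntegral_const]
    rw [sub_div]
    simp
    rfl
  have hnn : 0 ≤ ∫ s in A, (1 - Real.exp (-α*(t-s)))/α ∂μ := by
    refine integral_nonneg_of_ae ?_
    filter_upwards [ae_restrict_mem hAm] with s hs
    have h1 : Real.exp (-α*(t-s)) ≤ 1 := by
      rw [Real.exp_le_one_iff]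
      have : s ≤ t := hs.2
      nlinarith
    show (0:ℝ) ≤ (1 - Real.exp (-α*(t-s)))/α
    exact div_nonneg (by linarith) hα.le
  rw [c1, c2, c3, ENNReal.toReal_ofReal hnn, c4]

lemma inner_integrable (μ : Measure ℝ) [IsLocallyFiniteMeasure μ] (α : ℝ) (hα : 0 < α)
    (t : ℝ) (ht : 0 ≤ t) :
    IntegrableOn (fun u => ∫ s in Ioc (0:ℝ) u, Real.exp (-α*(u-s)) ∂μ) (Ioc (0:ℝ) t) := by
  set A : Set ℝ := Ioc (0:ℝ) t with hA
  have hAm : MeasurableSet A := measurableSet_Ioc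
  have hfin : μ A < ⊤ := lt_of_le_of_lt (measure_mono Ioc_subset_Icc_self) isCompact_Icc.measure_lt_top
  haveI : IsFiniteMeasure (volume.restrict A) :=
    ⟨by rw [Measure.restrict_apply_univ, hA, Real.volume_Ioc]; exact ENNReal.ofReal_lt_top⟩
  set f : ℝ × ℝ → ENNReal := fun p =>
    ({p : ℝ × ℝ | p.2 ≤ p.1}).indicator (fun p => ENNReal.ofReal (Real.exp (-α*(p.1-p.2)))) p with hf
  have hfmeas : Measurable f := by
    apply Measurable.indicator
    · exact (ENNReal.measurable_ofReal.comp (Real.continuous_exp.comp (continuous_const.mul (continuous_fst.sub continuous_snd))).measurable)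
    · exact measurableSet_le measurable_snd measurable_fst
  have hfle : ∀ p, f p ≤ 1 := by
    intro p
    by_cases hp : p ∈ {p : ℝ × ℝ | p.2 ≤ p.1}
    · show ({p : ℝ × ℝ | p.2 ≤ p.1}).indicator _ p ≤ 1
      rw [indicator_of_mem hp, ← ENNReal.ofReal_one]
      apply ENNReal.ofReal_le_ofReal
      rw [Real.exp_le_one_iff]
      have : p.2 ≤ p.1 := hp
      nlinarith
    · show ({p : ℝ × ℝ | p.2 ≤ p.1}).indicator _ p ≤ 1
      rw [indicator_of_notMem hp]; exact zero_le_one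
  set F : ℝ → ENNReal := fun u => ∫⁻ s in A, f (u, s) ∂μ with hF
  have step1 : ∀ u ∈ A, (∫ s in Ioc (0:ℝ) u, Real.exp (-α*(u-s)) ∂μ) = (F u).toReal := by
    intro u hu
    have e1 : F u = ∫⁻ s in Ioc (0:ℝ) u, ENNReal.ofReal (Real.exp (-α*(u-s))) ∂μ := by
      rw [hF]
      have heq : (fun s => f (u, s)) = (Iic u).indicator
          (fun s => ENNReal.ofReal (Real.exp (-α*(u-s)))) := by
        ext s
        by_cases hs : s ≤ u
        · simp [hf, Set.indicator_apply, hs]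
        · simp [hf, Set.indicator_apply, hs]
      simp only [heq]
      rw [lintegral_indicator measurableSet_Iic, Measure.restrict_restrict measurableSet_Iic]
      congr 1
      rw [hA, Iic_inter_Ioc_of_le hu.2]
    rw [e1, MeasureTheory.integral_eq_lintegral_of_nonneg_ae
      (Eventually.of_forall (fun s => (Real.exp_pos _).le))
      (Continuous.aestronglyMeasurable (by fun_prop))]
  have hFmeas : Measurable F := by
    rw [hF]
    exact Measurable.lintegral_prod_right (f := fun u s => f (u, s)) hfmeas
  have hFle : ∀ u, F u ≤ μ A := by
    intro u
    calc F u ≤ ∫⁻ _ in A, 1 ∂μ := lintegral_mono (fun s => hfle _)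
      _ = μ A := setLIntegral_one A
  refine Integrable.congr (g := fun u => ∫ s in Ioc (0:ℝ) u, Real.exp (-α*(u-s)) ∂μ)
    (f := fun u => (F u).toReal) ?_ ?_
  · refine Integrable.mono' (integrable_const (μ A).toReal)
      (hFmeas.ennreal_toReal.aestronglyMeasurable) ?_
    refine Eventually.of_forall (fun u => ?_)
    rw [Real.norm_eq_abs, abs_of_nonneg ENNReal.toReal_nonneg]
    exact ENNReal.toReal_mono hfin.ne (hFle u)
  · filter_upwards [ae_restrict_mem hAm] with u hu
    exact (step1 u hu).symm

lemma part1 (μ : Measure ℝ) [IsLocallyFiniteMeasure μ] (α h₀ : ℝ) (hα : 0 < α) (H : ℝ → ℝ)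
    (hH : ∀ t : ℝ, 0 ≤ t → H t = h₀ * Real.exp (-α * t)
        + ∫ s in Ioc (0:ℝ) t, Real.exp (-α * (t - s)) ∂μ) :
    ∀ t : ℝ, 0 ≤ t → H t = h₀ - α * (∫ s in (0:ℝ)..t, H s) + (μ (Ioc (0:ℝ) t)).toReal := by
  intro t ht
  have hI : ∫ s in (0:ℝ)..t, H s = h₀ * ((1 - Real.exp (-α*t))/α)
      + ((μ (Ioc (0:ℝ) t)).toReal/α - (∫ s in Ioc (0:ℝ) t, Real.exp (-α*(t-s)) ∂μ)/α) := by
    rw [intervalIntegral.integral_of_le ht]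
    rw [setIntegral_congr_fun measurableSet_Ioc (fun u (hu : u ∈ Ioc (0:ℝ) t) => hH u hu.1.le)]
    rw [integral_add (Continuous.integrableOn_Ioc (by fun_prop)) (inner_integrable μ α hα t ht)]
    congr 1
    · rw [MeasureTheory.integral_const_mul]
      congr 1
      have := exp_int α hα 0 t ht
      rw [intervalIntegral.integral_of_le ht] at this
      simp only [sub_zero] at this
      exact this
    · exact key_fubini μ α hα t ht
  have hHt := hH t ht
  rw [hI, hHt]
  field_simp
  ring

lemma bounded_on_compact (G : ℝ → ℝ)
    (hGr : ∀ t : ℝ, 0 ≤ t → ContinuousWithinAt G (Ici t) t)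
    (hGl : ∀ t : ℝ, 0 < t → ∃ l : ℝ, Tendsto G (nhdsWithin t (Iio t)) (nhds l))
    (b : ℝ) : ∃ M, ∀ y ∈ Icc (0:ℝ) b, |G y| ≤ M := by
  refine IsCompact.induction_on (isCompact_Icc) ⟨0, by simp⟩
    (fun s t hst ⟨M, hM⟩ => ⟨M, fun y hy => hM y (hst hy)⟩)
    (fun s t ⟨M, hM⟩ ⟨N, hN⟩ => ⟨max M N, fun y hy => hy.elim
      (fun h => (hM y h).trans (le_max_left _ _))
      (fun h => (hN y h).trans (le_max_right _ _))⟩) ?_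
  intro x hx
  have hr : ∀ᶠ y in nhdsWithin x (Ici x), |G y| ≤ |G x| + 1 := by
    have h1 := (hGr x hx.1).tendsto
    have h2 : ∀ᶠ y in nhdsWithin x (Ici x), G y ∈ Metric.ball (G x) 1 :=
      h1 (Metric.ball_mem_nhds _ one_pos)
    filter_upwards [h2] with y hy
    rw [Metric.mem_ball, Real.dist_eq] at hy
    linarith [abs_sub_abs_le_abs_sub (G y) (G x), hy.le]
  rcases eq_or_lt_of_le hx.1 with h0 | h0
  · refine ⟨{y | |G y| ≤ |G x| + 1}, ?_, ⟨|G x| + 1, fun y hy => hy⟩⟩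
    exact nhdsWithin_mono x (by rw [← h0]; exact Icc_subset_Ici_self) hr
  · obtain ⟨l, hl⟩ := hGl x h0
    have hlft : ∀ᶠ y in nhdsWithin x (Iio x), |G y| ≤ |l| + 1 := by
      have h2 : ∀ᶠ y in nhdsWithin x (Iio x), G y ∈ Metric.ball l 1 :=
        hl (Metric.ball_mem_nhds _ one_pos)
      filter_upwards [h2] with y hy
      rw [Metric.mem_ball, Real.dist_eq] at hy
      linarith [abs_sub_abs_le_abs_sub (G y) l, hy.le]
    set M := max (|G x| + 1) (|l| + 1) with hM
    refine ⟨{y | |G y| ≤ M}, ?_, ⟨M, fun y hy => hy⟩⟩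
    have hsub : Icc (0:ℝ) b ⊆ Ici x ∪ Iio x := fun y _ => (le_or_gt x y).imp id id
    have hle : nhdsWithin x (Icc 0 b) ≤ nhdsWithin x (Ici x) ⊔ nhdsWithin x (Iio x) := by
      rw [← nhdsWithin_union]
      exact nhdsWithin_mono x hsub
    apply hle
    rw [mem_sup]
    constructor
    · filter_upwards [hr] with y hy; exact hy.trans (le_max_left _ _)
    · filter_upwards [hlft] with y hy; exact hy.trans (le_max_right _ _)

lemma meas_G (G : ℝ → ℝ) (hGr : ∀ t : ℝ, 0 ≤ t → ContinuousWithinAt G (Ici t) t) :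
    Measurable (fun x => G (max x 0)) := by
  apply meas_of_rightCont
  intro x
  rcases lt_or_ge x 0 with hx | hx
  · have hev : ∀ᶠ y in nhdsWithin x (Ici x), G (max y 0) = G 0 ∨ True := by
      exact Eventually.of_forall (fun y => Or.inr trivial)
    -- x < 0 : the function is eventually constant? no: for y near x (|y| < |x|/..), y < 0 so max y 0 = 0
    have hmem : Iio (0:ℝ) ∈ nhdsWithin x (Ici x) :=
      nhdsWithin_le_nhds (Iio_mem_nhds hx)
    have : Tendsto (fun y => G (max y 0)) (nhdsWithin x (Ici x)) (nhds (G (max x 0))) := by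
      rw [max_eq_right hx.le]
      refine Tendsto.congr' ?_ tendsto_const_nhds
      filter_upwards [hmem] with y hy
      rw [max_eq_right (le_of_lt hy)]
    exact this
  · have hx0 : max x 0 = x := max_eq_left hx
    have := hGr x hx
    rw [ContinuousWithinAt] at this ⊢
    rw [hx0]
    refine Tendsto.congr' ?_ this
    filter_upwards [self_mem_nhdsWithin] with y (hy : y ∈ Ici x)
    rw [max_eq_left (hx.trans hy)]

lemma uniq (μ : Measure ℝ) [IsLocallyFiniteMeasure μ] (α h₀ : ℝ) (hα : 0 < α) (H : ℝ → ℝ)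
    (hH : ∀ t : ℝ, 0 ≤ t → H t = h₀ * Real.exp (-α * t)
        + ∫ s in Ioc (0:ℝ) t, Real.exp (-α * (t - s)) ∂μ)
    (G : ℝ → ℝ)
    (hGr : ∀ t : ℝ, 0 ≤ t → ContinuousWithinAt G (Ici t) t)
    (hGl : ∀ t : ℝ, 0 < t → ∃ l : ℝ, Tendsto G (nhdsWithin t (Iio t)) (nhds l))
    (hG0 : G 0 = h₀)
    (hGeq : ∀ t : ℝ, 0 ≤ t →
      G t = h₀ - α * (∫ s in (0:ℝ)..t, G s) + (μ (Ioc (0:ℝ) t)).toReal) :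
    ∀ t : ℝ, 0 ≤ t → G t = H t := by
  intro b hb
  obtain ⟨M, hM⟩ := bounded_on_compact G hGr hGl b
  have hGint : IntegrableOn G (Icc 0 b) := by
    have hGint' : IntegrableOn (fun x => G (max x 0)) (Icc 0 b) := by
      refine Integrable.mono' (integrable_const M) ((meas_G G hGr).aestronglyMeasurable) ?_
      filter_upwards [ae_restrict_mem measurableSet_Icc] with y hy
      rw [Real.norm_eq_abs]
      exact hM _ ⟨le_max_right _ _, max_le hy.2 hb⟩
    refine hGint'.congr ?_
    filter_upwards [ae_restrict_mem measurableSet_Icc] with y hy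
    rw [max_eq_left hy.1]
  have hHint : IntegrableOn H (Icc 0 b) := by
    rw [integrableOn_Icc_iff_integrableOn_Ioc]
    refine ((Continuous.integrableOn_Ioc (f := fun u => h₀ * Real.exp (-α * u)) (by fun_prop)).add
      (inner_integrable μ α hα b hb)).congr ?_
    filter_upwards [ae_restrict_mem measurableSet_Ioc] with u hu
    exact (hH u hu.1.le).symm
  set D : ℝ → ℝ := fun s => G s - H s with hD
  have hDint : IntegrableOn D (Icc 0 b) := hGint.sub hHint
  have hDi : ∀ r ∈ Icc (0:ℝ) b, IntervalIntegrable D volume 0 r := by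
    intro r hr
    rw [intervalIntegrable_iff_integrableOn_Ioc_of_le hr.1]
    exact hDint.mono_set (fun y hy => ⟨hy.1.le, hy.2.trans hr.2⟩)
  set Φ : ℝ → ℝ := fun r => ∫ s in (0:ℝ)..r, D s with hΦ
  have hDeq : EqOn D (fun r => -α * Φ r) (Icc (0:ℝ) b) := by
    intro r hr
    have h1 := hGeq r hr.1
    have h2 := part1 μ α h₀ hα H hH r hr.1
    have hGi : IntervalIntegrable G volume 0 r := by
      rw [intervalIntegrable_iff_integrableOn_Ioc_of_le hr.1]
      exact hGint.mono_set (fun y hy => ⟨hy.1.le, hy.2.trans hr.2⟩)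
    have hHi : IntervalIntegrable H volume 0 r := by
      rw [intervalIntegrable_iff_integrableOn_Ioc_of_le hr.1]
      exact hHint.mono_set (fun y hy => ⟨hy.1.le, hy.2.trans hr.2⟩)
    show G r - H r = -α * ∫ s in (0:ℝ)..r, (G s - H s)
    rw [intervalIntegral.integral_sub hGi hHi, h1, h2]
    ring
  have hΦcont : ContinuousOn Φ (Icc 0 b) := by
    refine (intervalIntegral.continuousOn_primitive hDint).congr ?_
    intro x hx
    show (∫ s in (0:ℝ)..x, D s) = ∫ t in Ioc (0:ℝ) x, D t
    rw [intervalIntegral.integral_of_le hx.1]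
  have hDcont : ContinuousOn D (Icc 0 b) := (continuousOn_const.mul hΦcont).congr hDeq
  set E : ℝ → ℝ := fun r => Real.exp (α*r) * Φ r with hE
  have hEcont : ContinuousOn E (Icc 0 b) := (Continuous.continuousOn (by fun_prop)).mul hΦcont
  have hEderiv : ∀ r ∈ Ico (0:ℝ) b, HasDerivWithinAt E 0 (Ici r) r := by
    intro r hr
    have hr' : r ∈ Icc (0:ℝ) b := ⟨hr.1, hr.2.le⟩
    have hIcc_mem : Icc (0:ℝ) b ∈ nhdsWithin r (Ioi r) := by
      rw [mem_nhdsWithin]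
      exact ⟨Iio b, isOpen_Iio, hr.2, fun y hy => ⟨hr.1.trans hy.2.le, hy.1.le⟩⟩
    have hDc : ContinuousWithinAt D (Ioi r) r :=
      (hDcont r hr').mono_of_mem_nhdsWithin hIcc_mem
    have hmeasf : StronglyMeasurableAtFilter D (nhdsWithin r (Ioi r)) :=
      ⟨Icc 0 b, hIcc_mem, hDcont.aestronglyMeasurable measurableSet_Icc⟩
    have hΦd : HasDerivWithinAt Φ (D r) (Ici r) r :=
      intervalIntegral.integral_hasDerivWithinAt_right (s := Ici r) (t := Ioi r)
        (hDi r hr') hmeasf hDc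
    have hexp : HasDerivWithinAt (fun u => Real.exp (α*u)) (Real.exp (α*r) * α) (Ici r) r := by
      have h := (((hasDerivAt_id r).const_mul α).exp)
      simpa [mul_comm] using h.hasDerivWithinAt
    have hprod := hexp.mul hΦd
    have heq := hDeq hr'
    simp only at heq
    have h0 : (0:ℝ) = Real.exp (α*r) * α * Φ r + Real.exp (α*r) * D r := by
      rw [heq]; ring
    rw [h0]
    exact hprod
  have hconst := constant_of_has_deriv_right_zero hEcont hEderiv
  have hEb := hconst b (right_mem_Icc.2 hb)
  have hE0 : E 0 = 0 := by
    simp [hE, hΦ, intervalIntegral.integral_same]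
  rw [hE0] at hEb
  have hΦb : Φ b = 0 := by
    have hexpne : Real.exp (α*b) ≠ 0 := (Real.exp_pos _).ne'
    rw [hE] at hEb
    exact (mul_eq_zero.1 hEb).resolve_left hexpne
  have := hDeq (right_mem_Icc.2 hb)
  simp only [hΦb, mul_zero] at this
  have : G b - H b = 0 := this
  linarith

theorem stmt_0 (μ : Measure ℝ) [IsLocallyFiniteMeasure μ]
    (α h₀ : ℝ) (hα : 0 < α) (H : ℝ → ℝ)
    (hH : ∀ t : ℝ, 0 ≤ t → H t = h₀ * Real.exp (-α * t)
        + ∫ s in Ioc (0:ℝ) t, Real.exp (-α * (t - s)) ∂μ) :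
    (∀ t : ℝ, 0 ≤ t →
        H t = h₀ - α * (∫ s in (0:ℝ)..t, H s) + (μ (Ioc (0:ℝ) t)).toReal)
    ∧ ∀ G : ℝ → ℝ,
        (∀ t : ℝ, 0 ≤ t → ContinuousWithinAt G (Ici t) t) →
        (∀ t : ℝ, 0 < t → ∃ l : ℝ, Tendsto G (nhdsWithin t (Iio t)) (nhds l)) →
        G 0 = h₀ →
        (∀ t : ℝ, 0 ≤ t →
          G t = h₀ - α * (∫ s in (0:ℝ)..t, G s) + (μ (Ioc (0:ℝ) t)).toReal) →
        ∀ t : ℝ, 0 ≤ t → G t = H t := by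
  exact ⟨part1 μ α h₀ hα H hH,
    fun G hGr hGl hG0 hGeq => uniq μ α h₀ hα H hH G hGr hGl hG0 hGeq⟩
end

section
/- Let β > 0, γ > 0, C₂ ∈ ℕ, and let E₁ ~ Exp(1), E_β ~ Exp(β), and E_{γ,1},…,E_{γ,C₂} ~ Exp(γ) be independent. Then for every s ≥ 0 with β + 1 ≠ γk for all 1 ≤ k ≤ C₂, and every u ∈ [0,1]: E[ (1 - e^{-γ(s - E_β)} + u e^{-γ(s - E_β)})^{C₂} · 1{E_β < min(s, E₁)} ] = Σ_{k=0}^{C₂} (u-1)^k p₂(s,k), where p₂(s,k) = (β/(β+1-γk)) · binom(C₂,k) · (e^{-γks} - e^{-(β+1)s}). -/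
open scoped NNReal ENNReal
open MeasureTheory intervalIntegral in
lemma exp_int_s5 (c : ℝ) (hc : c ≠ 0) (s : ℝ) :
    ∫ y in (0:ℝ)..s, Real.exp (c * y) = (Real.exp (c * s) - 1) / c := by
  have h : ∀ y ∈ Set.uIcc (0:ℝ) s, HasDerivAt (fun y => Real.exp (c * y) / c) (Real.exp (c * y)) y := by
    intro y _
    have := ((Real.hasDerivAt_exp (c*y)).comp y ((hasDerivAt_id y).const_mul c))
    simpa [mul_comm, mul_div_assoc, mul_div_cancel_left₀ _ hc] using this.div_const c
  rw [integral_eq_sub_of_hasDerivAt h]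
  · simp [sub_div]
  · exact (Real.continuous_exp.comp (continuous_const.mul continuous_id)).intervalIntegrable 0 s

open MeasureTheory in
lemma map_exp (μ : Measure ℝ) [IsProbabilityMeasure μ] (β : ℝ) (hβ : 0 < β)
    (h : ∀ x : ℝ, 0 ≤ x → μ (Set.Ioi x) = ENNReal.ofReal (Real.exp (-β * x))) :
    μ = MeasureTheory.volume.withDensity
      (fun y => ((Real.toNNReal (if 0 ≤ y then β * Real.exp (-β * y) else 0) : ℝ≥0) : ℝ≥0∞)) := by
  have hiic : ∀ a : ℝ, 0 ≤ a → μ (Set.Iic a) = ENNReal.ofReal (1 - Real.exp (-β * a)) := by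
    intro a ha
    have : Set.Iic a = (Set.Ioi a)ᶜ := by simp
    rw [this, measure_compl measurableSet_Ioi (measure_ne_top _ _), h a ha,
      measure_univ, ← ENNReal.ofReal_one, ← ENNReal.ofReal_sub _ (Real.exp_nonneg _)]
  have hzero : μ (Set.Iic 0) = 0 := by
    rw [hiic 0 le_rfl]; simp
  refine Measure.ext_of_Iic μ _ (fun a => ?_)
  rw [withDensity_apply _ measurableSet_Iic]
  have hind : ∀ y : ℝ, ((Real.toNNReal (if 0 ≤ y then β * Real.exp (-β * y) else 0) : ℝ≥0) : ℝ≥0∞)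
      = Set.indicator (Set.Ici 0) (fun y => ENNReal.ofReal (β * Real.exp (-β * y))) y := by
    intro y
    by_cases hy : 0 ≤ y <;> simp [hy, ENNReal.ofReal, Set.indicator_of_mem, Set.indicator_of_notMem]
  simp_rw [hind]
  rw [lintegral_indicator measurableSet_Ici, Measure.restrict_restrict measurableSet_Ici,
    Set.Ici_inter_Iic]
  by_cases ha : 0 ≤ a
  · rw [hiic a ha]
    have hint : IntegrableOn (fun y => β * Real.exp (-β * y)) (Set.Icc 0 a) :=
      (Continuous.integrableOn_Icc (by fun_prop))
    rw [← MeasureTheory.ofReal_integral_eq_lintegral_ofReal hint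
      (Filter.Eventually.of_forall fun y => by positivity)]
    congr 1
    rw [MeasureTheory.integral_Icc_eq_integral_Ioc, ← intervalIntegral.integral_of_le ha]
    simp_rw [intervalIntegral.integral_const_mul]
    rw [exp_int_s5 (-β) (by linarith) a]
    rw [show β * ((Real.exp (-β * a) - 1) / -β) = -(Real.exp (-β * a) - 1) from by
      rw [div_neg, mul_neg, mul_div_cancel₀ _ hβ.ne']]
    ring
  · have h1 : Set.Icc (0:ℝ) a = ∅ := Set.Icc_eq_empty (by linarith)
    have h2 : μ (Set.Iic a) = 0 :=
      le_antisymm (le_trans (measure_mono (Set.Iic_subset_Iic.2 (le_of_not_ge ha))) hzero.le)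
        (zero_le)
    rw [h1, h2]; simp
open MeasureTheory ProbabilityTheory

theorem stmt_5 {Ω : Type*} [MeasureSpace Ω] [IsProbabilityMeasure (ℙ : Measure Ω)]
    (β γ : ℝ) (hβ : 0 < β) (hγ : 0 < γ) (C₂ : ℕ)
    (f : Fin (C₂ + 1 + 1) → Ω → ℝ)
    (hmeas : ∀ i, Measurable (f i))
    (hindep : iIndepFun f ℙ)
    (hE1 : ∀ x : ℝ, 0 ≤ x → ℙ {ω | x < f 0 ω} = ENNReal.ofReal (Real.exp (-x)))
    (hEβ : ∀ x : ℝ, 0 ≤ x → ℙ {ω | x < f 1 ω} = ENNReal.ofReal (Real.exp (-β * x)))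
    (hEγ : ∀ (k : Fin C₂) (x : ℝ), 0 ≤ x →
      ℙ {ω | x < f ⟨(k : ℕ) + 2, by omega⟩ ω} = ENNReal.ofReal (Real.exp (-γ * x))) :
    ∀ s : ℝ, 0 ≤ s → (∀ k : ℕ, 1 ≤ k → k ≤ C₂ → β + 1 ≠ γ * k) →
      ∀ u ∈ Set.Icc (0:ℝ) 1,
        (∫ ω, Set.indicator {ω | f 1 ω < min s (f 0 ω)}
            (fun ω => (1 - Real.exp (-γ * (s - f 1 ω))
              + u * Real.exp (-γ * (s - f 1 ω))) ^ C₂) ω ∂ℙ)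
          = ∑ k ∈ Finset.range (C₂ + 1),
              (u - 1) ^ k * (β / (β + 1 - γ * k) * (C₂.choose k)
                * (Real.exp (-γ * k * s) - Real.exp (-(β + 1) * s))) := by
  intro s hs hne u hu
  obtain ⟨hu0, hu1⟩ := hu
  -- notation
  set g : ℝ → ℝ := fun y => (1 - Real.exp (-γ * (s - y)) + u * Real.exp (-γ * (s - y))) ^ C₂
    with hgdef
  have hgm : Measurable g := by fun_prop
  have hg01 : ∀ y : ℝ, y ≤ s → 0 ≤ g y ∧ g y ≤ 1 := by
    intro y hy
    have hEpos : 0 < Real.exp (-γ * (s - y)) := Real.exp_pos _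
    have hEle : Real.exp (-γ * (s - y)) ≤ 1 := by
      rw [Real.exp_le_one_iff]; nlinarith
    constructor
    · apply pow_nonneg; nlinarith
    · apply pow_le_one₀ (by nlinarith) (by nlinarith)
  -- distributions
  set μ0 : Measure ℝ := Measure.map (f 0) ℙ with hμ0def
  set μ1 : Measure ℝ := Measure.map (f 1) ℙ with hμ1def
  haveI : IsProbabilityMeasure μ0 := Measure.isProbabilityMeasure_map (hmeas 0).aemeasurable
  haveI : IsProbabilityMeasure μ1 := Measure.isProbabilityMeasure_map (hmeas 1).aemeasurable
  have hμ0tail : ∀ x : ℝ, 0 ≤ x → μ0 (Set.Ioi x) = ENNReal.ofReal (Real.exp (-x)) := by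
    intro x hx
    rw [hμ0def, Measure.map_apply (hmeas 0) measurableSet_Ioi]
    exact hE1 x hx
  have hμ1tail : ∀ x : ℝ, 0 ≤ x → μ1 (Set.Ioi x) = ENNReal.ofReal (Real.exp (-β * x)) := by
    intro x hx
    rw [hμ1def, Measure.map_apply (hmeas 1) measurableSet_Ioi]
    exact hEβ x hx
  have hμ1d : μ1 = MeasureTheory.volume.withDensity
      (fun y => ((Real.toNNReal (if 0 ≤ y then β * Real.exp (-β * y) else 0) : ℝ≥0) : ℝ≥0∞)) :=
    map_exp μ1 β hβ hμ1tail
  -- independence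
  have hIF : IndepFun (f 0) (f 1) ℙ := hindep.indepFun (by simp [Fin.ext_iff])
  have hpairm : Measurable (fun ω => (f 0 ω, f 1 ω)) := (hmeas 0).prodMk (hmeas 1)
  have hmap : Measure.map (fun ω => (f 0 ω, f 1 ω)) ℙ = μ0.prod μ1 :=
    (indepFun_iff_map_prod_eq_prod_map_map (hmeas 0).aemeasurable (hmeas 1).aemeasurable).mp hIF
  set S : Set (ℝ × ℝ) := {p | p.2 < min s p.1} with hSdef
  have hS : MeasurableSet S := measurableSet_lt measurable_snd (measurable_const.min measurable_fst)
  set F : ℝ × ℝ → ℝ := S.indicator (fun p => g p.2) with hFdef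
  have hFm : Measurable F := (hgm.comp measurable_snd).indicator hS
  have h1 : ∀ ω, Set.indicator {ω | f 1 ω < min s (f 0 ω)}
      (fun ω => (1 - Real.exp (-γ * (s - f 1 ω)) + u * Real.exp (-γ * (s - f 1 ω))) ^ C₂) ω
      = F (f 0 ω, f 1 ω) := by
    intro ω
    simp only [hFdef, hSdef, Set.indicator, Set.mem_setOf_eq]
    rfl
  simp_rw [h1]
  rw [← integral_map hpairm.aemeasurable hFm.aestronglyMeasurable, hmap]
  have hFint : Integrable F (μ0.prod μ1) := by
    refine Integrable.mono' (integrable_const 1) hFm.aestronglyMeasurable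
      (Filter.Eventually.of_forall fun p => ?_)
    rw [Real.norm_eq_abs, hFdef]
    by_cases hp : p ∈ S
    · rw [Set.indicator_of_mem hp]
      have hps : p.2 < s := lt_of_lt_of_le hp (min_le_left _ _)
      obtain ⟨h0, hle⟩ := hg01 p.2 hps.le
      rw [abs_of_nonneg h0]; exact hle
    · rw [Set.indicator_of_notMem hp]; simp
  rw [MeasureTheory.integral_prod_symm F hFint]
  -- the inner integral
  have hae : ∀ᵐ y ∂μ1, 0 < y := by
    rw [ae_iff]
    have h2 : {y : ℝ | ¬ 0 < y} = (Set.Ioi (0:ℝ))ᶜ := by ext y; simp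
    rw [h2, measure_compl measurableSet_Ioi (measure_ne_top _ _), hμ1tail 0 le_rfl]
    simp
  have hinner : ∀ᵐ y ∂μ1, (∫ x, F (x, y) ∂μ0)
      = (Set.Ioo 0 s).indicator (fun y => g y * Real.exp (-y)) y := by
    filter_upwards [hae] with y hy
    have hFy : (fun x => F (x, y)) = (Set.Ioi y).indicator (fun _ => if y < s then g y else 0) := by
      funext x
      by_cases h1' : y < x <;> by_cases h2' : y < s <;>
        simp [hFdef, hSdef, Set.indicator, h1', h2']
    rw [hFy, MeasureTheory.integral_indicator measurableSet_Ioi, MeasureTheory.setIntegral_const,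
      measureReal_def, hμ0tail y hy.le]
    by_cases h2' : y < s
    · rw [Set.indicator_of_mem (Set.mem_Ioo.mpr ⟨hy, h2'⟩)]
      simp [h2', ENNReal.toReal_ofReal (Real.exp_nonneg _), smul_eq_mul, mul_comm]
    · rw [Set.indicator_of_notMem (by simp [h2'])]
      simp [h2']
  have hdm : Measurable (fun y : ℝ => Real.toNNReal (if 0 ≤ y then β * Real.exp (-β * y) else 0)) := by
    apply Measurable.real_toNNReal
    exact Measurable.ite (measurableSet_Ici : MeasurableSet (Set.Ici (0:ℝ)))
      (by fun_prop) measurable_const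
  rw [integral_congr_ae hinner, hμ1d, integral_withDensity_eq_integral_smul hdm _]
  have hcongr : ∀ y : ℝ, (Real.toNNReal (if 0 ≤ y then β * Real.exp (-β * y) else 0))
      • ((Set.Ioo 0 s).indicator (fun y => g y * Real.exp (-y)) y)
      = (Set.Ioo 0 s).indicator (fun y => β * Real.exp (-β * y) * (g y * Real.exp (-y))) y := by
    intro y
    by_cases hy : y ∈ Set.Ioo 0 s
    · rw [Set.indicator_of_mem hy, Set.indicator_of_mem hy, if_pos hy.1.le,
        NNReal.smul_def, Real.coe_toNNReal _ (by positivity), smul_eq_mul]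
    · rw [Set.indicator_of_notMem hy, Set.indicator_of_notMem hy, smul_zero]
  simp_rw [hcongr]
  rw [MeasureTheory.integral_indicator measurableSet_Ioo,
    ← MeasureTheory.integral_Ioc_eq_integral_Ioo, ← intervalIntegral.integral_of_le hs]
  have hexp : ∀ y : ℝ, β * Real.exp (-β * y) * (g y * Real.exp (-y))
      = ∑ k ∈ Finset.range (C₂ + 1), (u - 1) ^ k * (C₂.choose k : ℝ)
          * (β * (Real.exp (-γ * k * s) * Real.exp ((γ * k - (β + 1)) * y))) := by
    intro y
    have key : ∀ k : ℕ, Real.exp (-β * y) * ((Real.exp (-γ * (s - y))) ^ k * Real.exp (-y))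
        = Real.exp (-γ * k * s) * Real.exp ((γ * k - (β + 1)) * y) := by
      intro k
      rw [← Real.exp_nat_mul, ← Real.exp_add, ← Real.exp_add, ← Real.exp_add]
      congr 1
      push_cast
      ring
    have hb : g y = ((u - 1) * Real.exp (-γ * (s - y)) + 1) ^ C₂ := by
      rw [hgdef]; ring_nf
    rw [hb, add_pow, Finset.sum_mul, Finset.mul_sum]
    refine Finset.sum_congr rfl (fun k hk => ?_)
    rw [mul_pow, one_pow, ← key k]
    ring
  rw [intervalIntegral.integral_congr (g := fun y => ∑ k ∈ Finset.range (C₂ + 1),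
        (u - 1) ^ k * (C₂.choose k : ℝ)
          * (β * (Real.exp (-γ * k * s) * Real.exp ((γ * k - (β + 1)) * y))))
      (fun y _ => hexp y),
    intervalIntegral.integral_finset_sum
      (fun k _ => (Continuous.intervalIntegrable (by fun_prop) 0 s))]
  refine Finset.sum_congr rfl (fun k hk => ?_)
  have hk2 : k ≤ C₂ := Nat.lt_succ_iff.mp (Finset.mem_range.mp hk)
  have hcc : γ * (k : ℝ) - (β + 1) ≠ 0 := by
    intro h
    rcases Nat.eq_zero_or_pos k with rfl | hk1
    · norm_num at h; linarith
    · exact hne k hk1 hk2 (by linarith)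
  have h2 : β + 1 - γ * (k : ℝ) ≠ 0 := fun h => hcc (by linarith)
  have hrw : (fun y : ℝ => (u - 1) ^ k * (C₂.choose k : ℝ)
        * (β * (Real.exp (-γ * k * s) * Real.exp ((γ * k - (β + 1)) * y))))
      = fun y => ((u - 1) ^ k * (C₂.choose k : ℝ) * (β * Real.exp (-γ * k * s)))
        * Real.exp ((γ * (k : ℝ) - (β + 1)) * y) := by
    funext y; ring
  rw [hrw, intervalIntegral.integral_const_mul, exp_int_s5 _ hcc s]
  have hA : Real.exp (-γ * k * s) * (Real.exp ((γ * (k : ℝ) - (β + 1)) * s) - 1)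
      = Real.exp (-(β + 1) * s) - Real.exp (-γ * k * s) := by
    rw [mul_sub, ← Real.exp_add, mul_one]
    ring_nf
  rw [show ((u - 1) ^ k * (C₂.choose k : ℝ) * (β * Real.exp (-γ * k * s)))
        * ((Real.exp ((γ * (k : ℝ) - (β + 1)) * s) - 1) / (γ * (k : ℝ) - (β + 1)))
      = ((u - 1) ^ k * (C₂.choose k : ℝ) * β)
        * ((Real.exp (-γ * k * s) * (Real.exp ((γ * (k : ℝ) - (β + 1)) * s) - 1))
          / (γ * (k : ℝ) - (β + 1))) from by ring, hA]
  field_simp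
  ring
end

section
/- Let β > 0, γ > 0, λ > 0, C₁, C₂, w ∈ ℕ. Then λ ( C₁ ∫_0^∞ e^{-γs} ds + w C₂ ∫_0^∞ P(E_β < min(E₁, s), s < E_β + E_γ) ds ) = (λ/γ)( C₁ + C₂ β w/(β+1) ), where E₁ ~ Exp(1), E_β ~ Exp(β), E_γ ~ Exp(γ) are independent. -/
open MeasureTheory ProbabilityTheory

section Helpers

open Real Set
open scoped ENNReal NNReal

private lemma stmt8_L0 {b : ℝ} (hb : 0 < b) (c : ℝ) :
    ∫ x in Set.Ioi c, Real.exp (-(b * x)) = Real.exp (-(b * c)) / b := by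
  have hderiv : ∀ x ∈ Set.Ici c, HasDerivAt (fun x => -Real.exp (-(b * x)) / b)
      (Real.exp (-(b * x))) x := by
    intro x _
    have h := ProbabilityTheory.hasDerivAt_neg_exp_mul_exp (r := b) (x := x)
    have := h.div_const b
    simpa [mul_comm, mul_div_assoc, mul_div_cancel_left₀ _ hb.ne'] using this
  have hint : IntegrableOn (fun x => Real.exp (-(b * x))) (Set.Ioi c) := by
    simpa [neg_mul] using exp_neg_integrableOn_Ioi c hb
  have htend : Filter.Tendsto (fun x => -Real.exp (-(b * x)) / b) Filter.atTop (nhds 0) := by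
    have h1 : Filter.Tendsto (fun x : ℝ => -(b * x)) Filter.atTop Filter.atBot :=
      Filter.tendsto_neg_atTop_atBot.comp (Filter.Tendsto.const_mul_atTop hb Filter.tendsto_id)
    have h2 := (Real.tendsto_exp_atBot.comp h1).neg.div_const b
    simpa using h2
  have := integral_Ioi_of_hasDerivAt_of_tendsto' hderiv hint htend
  rw [this]; ring

private lemma stmt8_L1 {b : ℝ} (hb : 0 < b) (c : ℝ) :
    ∫⁻ x in Set.Ioi c, ENNReal.ofReal (Real.exp (-(b * x)))
      = ENNReal.ofReal (Real.exp (-(b * c)) / b) := by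
  rw [← stmt8_L0 hb c, ← ofReal_integral_eq_lintegral_ofReal]
  · have := exp_neg_integrableOn_Ioi c hb; simp only [neg_mul] at this; exact this
  · exact Filter.Eventually.of_forall fun x => (Real.exp_pos _).le

private lemma stmt8_expTail {r : ℝ} (hr : 0 < r) {c : ℝ} (hc : 0 ≤ c) :
    expMeasure r (Set.Ioi c) = ENNReal.ofReal (Real.exp (-(r * c))) := by
  have : expMeasure r (Set.Ioi c) = ∫⁻ x in Set.Ioi c, exponentialPDF r x := by
    rw [expMeasure, gammaMeasure, withDensity_apply _ measurableSet_Ioi]; rfl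
  rw [this]
  have heq : ∀ x ∈ Set.Ioi c, exponentialPDF r x
      = ENNReal.ofReal r * ENNReal.ofReal (Real.exp (-(r * x))) := by
    intro x hx
    rw [exponentialPDF_of_nonneg (hc.trans (le_of_lt hx)),
      ENNReal.ofReal_mul hr.le]
  rw [setLIntegral_congr_fun measurableSet_Ioi heq,
    lintegral_const_mul _ (by fun_prop), stmt8_L1 hr c, ← ENNReal.ofReal_mul hr.le,
    mul_div_cancel₀ _ hr.ne']

private lemma stmt8_lawEq {b : ℝ} (hb : 0 < b) (μ : Measure ℝ) [IsProbabilityMeasure μ]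
    (h : ∀ x : ℝ, 0 ≤ x → μ (Set.Ioi x) = ENNReal.ofReal (Real.exp (-(b * x)))) :
    μ = expMeasure b := by
  haveI := isProbabilityMeasure_expMeasure hb
  have tails : ∀ a : ℝ, μ (Set.Ioi a) = expMeasure b (Set.Ioi a) := by
    intro a
    rcases le_or_gt 0 a with ha | ha
    · rw [h a ha, stmt8_expTail hb ha]
    · have h1 : μ (Set.Ioi a) = 1 := by
        refine le_antisymm prob_le_one ?_
        calc (1:ℝ≥0∞) = μ (Set.Ioi 0) := by rw [h 0 le_rfl]; simp
        _ ≤ μ (Set.Ioi a) := measure_mono (Set.Ioi_subset_Ioi ha.le)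
      have h2 : expMeasure b (Set.Ioi a) = 1 := by
        refine le_antisymm prob_le_one ?_
        calc (1:ℝ≥0∞) = expMeasure b (Set.Ioi 0) := by rw [stmt8_expTail hb le_rfl]; simp
        _ ≤ expMeasure b (Set.Ioi a) := measure_mono (Set.Ioi_subset_Ioi ha.le)
      rw [h1, h2]
  refine Measure.ext_of_Iic μ (expMeasure b) fun a => ?_
  rw [← Set.compl_Ioi, prob_compl_eq_one_sub measurableSet_Ioi,
    prob_compl_eq_one_sub measurableSet_Ioi, tails a]

/-- The integrand for the double-integral computation. -/
noncomputable def stmt8_G (β γ : ℝ) (s t : ℝ) : ℝ≥0∞ :=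
  Set.indicator (Set.Ico 0 s)
    (fun t => ENNReal.ofReal (β * Real.exp (-((β+1)*t)) * Real.exp (-(γ*(s-t))))) t

private lemma stmt8_Gmeas (β γ : ℝ) : Measurable (Function.uncurry (stmt8_G β γ)) := by
  have : Function.uncurry (stmt8_G β γ) = Set.indicator {p : ℝ × ℝ | 0 ≤ p.2 ∧ p.2 < p.1}
      (fun p => ENNReal.ofReal (β * Real.exp (-((β+1)*p.2)) * Real.exp (-(γ*(p.1-p.2))))) := by
    funext p
    simp only [Function.uncurry, stmt8_G, Set.indicator_apply, Set.mem_Ico, Set.mem_setOf_eq]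
  rw [this]
  exact Measurable.indicator (by fun_prop)
    ((measurableSet_le measurable_const measurable_snd).inter
      (measurableSet_lt measurable_snd measurable_fst))

private lemma stmt8_KEY {Ω : Type*} [MeasureSpace Ω] [IsProbabilityMeasure (ℙ : Measure Ω)]
    (β γ : ℝ) (hβ : 0 < β) (hγ : 0 < γ)
    (f : Fin 3 → Ω → ℝ) (hmeas : ∀ i, Measurable (f i))
    (hindep : iIndepFun f ℙ)
    (h1 : ∀ x : ℝ, 0 ≤ x → ℙ {ω | x < f 0 ω} = ENNReal.ofReal (Real.exp (-x)))
    (h2 : ∀ x : ℝ, 0 ≤ x → ℙ {ω | x < f 1 ω} = ENNReal.ofReal (Real.exp (-β * x)))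
    (h3 : ∀ x : ℝ, 0 ≤ x → ℙ {ω | x < f 2 ω} = ENNReal.ofReal (Real.exp (-γ * x)))
    {s : ℝ} (hs : 0 < s) :
    ℙ {ω | f 1 ω < min (f 0 ω) s ∧ s < f 1 ω + f 2 ω} = ∫⁻ t, stmt8_G β γ s t := by
  haveI := isProbabilityMeasure_expMeasure hβ
  set Y : Ω → ℝ × ℝ := fun ω => (f 0 ω, f 2 ω) with hYdef
  have hY : Measurable Y := (hmeas 0).prodMk (hmeas 2)
  set C : Set (ℝ × ℝ × ℝ) := {p | p.1 < min p.2.1 s ∧ s < p.1 + p.2.2} with hCdef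
  have hC : MeasurableSet C :=
    (measurableSet_lt measurable_fst ((measurable_fst.comp measurable_snd).min measurable_const)).inter
      (measurableSet_lt measurable_const (measurable_fst.add (measurable_snd.comp measurable_snd)))
  have hμ1 : Measure.map (f 1) ℙ = expMeasure β := by
    haveI : IsProbabilityMeasure (Measure.map (f 1) ℙ) :=
      Measure.isProbabilityMeasure_map (hmeas 1).aemeasurable
    refine stmt8_lawEq hβ _ fun x hx => ?_
    rw [Measure.map_apply (hmeas 1) measurableSet_Ioi]
    have : f 1 ⁻¹' Set.Ioi x = {ω | x < f 1 ω} := rfl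
    rw [this, h2 x hx, neg_mul]
  have hμ02 : Measure.map Y ℙ = (Measure.map (f 0) ℙ).prod (Measure.map (f 2) ℙ) :=
    (indepFun_iff_map_prod_eq_prod_map_map (hmeas 0).aemeasurable (hmeas 2).aemeasurable).mp
      (hindep.indepFun (show (0 : Fin 3) ≠ 2 by decide))
  have hI : IndepFun (f 1) Y ℙ :=
    (hindep.indepFun_prodMk hmeas 0 2 1 (by decide) (by decide)).symm
  have step1 : ℙ {ω | f 1 ω < min (f 0 ω) s ∧ s < f 1 ω + f 2 ω}
      = ((expMeasure β).prod ((Measure.map (f 0) ℙ).prod (Measure.map (f 2) ℙ))) C := by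
    rw [← hμ1, ← hμ02,
      ← (indepFun_iff_map_prod_eq_prod_map_map (hmeas 1).aemeasurable hY.aemeasurable).mp hI,
      Measure.map_apply ((hmeas 1).prodMk hY) hC]
    rfl
  rw [step1, Measure.prod_apply hC]
  have slice : ∀ t : ℝ, ((Measure.map (f 0) ℙ).prod (Measure.map (f 2) ℙ)) (Prod.mk t ⁻¹' C)
      = Set.indicator (Set.Iio s)
        (fun t => (Measure.map (f 0) ℙ) (Set.Ioi t) * (Measure.map (f 2) ℙ) (Set.Ioi (s - t))) t := by
    intro t
    rcases lt_or_ge t s with ht | ht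
    · have hpre : Prod.mk t ⁻¹' C = Set.Ioi t ×ˢ Set.Ioi (s - t) := by
        ext p
        simp only [hCdef, Set.mem_preimage, Set.mem_setOf_eq, lt_min_iff, Set.mem_prod,
          Set.mem_Ioi]
        constructor
        · rintro ⟨⟨hp1, _⟩, hp2⟩; exact ⟨hp1, by linarith⟩
        · rintro ⟨hp1, hp2⟩; exact ⟨⟨hp1, ht⟩, by linarith⟩
      rw [hpre, Measure.prod_prod, Set.indicator_of_mem (Set.mem_Iio.mpr ht)]
    · have hpre : Prod.mk t ⁻¹' C = ∅ := by
        ext p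
        simp only [hCdef, Set.mem_preimage, Set.mem_setOf_eq, lt_min_iff, Set.mem_empty_iff_false,
          iff_false, not_and]
        rintro ⟨_, h2'⟩
        linarith
      rw [hpre, measure_empty, Set.indicator_of_notMem (by simpa using ht)]
  rw [lintegral_congr slice]
  have hmeas0 : Measurable fun t : ℝ => (Measure.map (f 0) ℙ) (Set.Ioi t) := by
    refine Antitone.measurable fun a b hab => measure_mono (Set.Ioi_subset_Ioi hab)
  have hmeas2 : Measurable fun t : ℝ => (Measure.map (f 2) ℙ) (Set.Ioi (s - t)) := by
    refine Monotone.measurable fun a b hab => measure_mono (Set.Ioi_subset_Ioi (by linarith))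
  have hh : Measurable (Set.indicator (Set.Iio s)
      (fun t => (Measure.map (f 0) ℙ) (Set.Ioi t) * (Measure.map (f 2) ℙ) (Set.Ioi (s - t)))) :=
    (hmeas0.mul hmeas2).indicator measurableSet_Iio
  have mpdf : Measurable (exponentialPDF β) := (measurable_exponentialPDFReal β).ennreal_ofReal
  rw [show expMeasure β = volume.withDensity (exponentialPDF β) from rfl,
    lintegral_withDensity_eq_lintegral_mul volume mpdf hh]
  refine lintegral_congr fun t => ?_
  simp only [Pi.mul_apply]
  rcases lt_or_ge t 0 with ht0 | ht0
  · rw [exponentialPDF_of_neg ht0, zero_mul, stmt8_G,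
      Set.indicator_of_notMem (fun hmem => absurd hmem.1 (not_le.mpr ht0))]
  · rcases lt_or_ge t s with hts | hts
    · rw [Set.indicator_of_mem (Set.mem_Iio.mpr hts), exponentialPDF_of_nonneg ht0, stmt8_G,
        Set.indicator_of_mem (Set.mem_Ico.mpr ⟨ht0, hts⟩)]
      have e0 : (Measure.map (f 0) ℙ) (Set.Ioi t) = ENNReal.ofReal (Real.exp (-t)) := by
        rw [Measure.map_apply (hmeas 0) measurableSet_Ioi]
        exact h1 t ht0
      have e2 : (Measure.map (f 2) ℙ) (Set.Ioi (s - t))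
          = ENNReal.ofReal (Real.exp (-(γ * (s - t)))) := by
        rw [Measure.map_apply (hmeas 2) measurableSet_Ioi, ← neg_mul]
        exact h3 (s - t) (by linarith)
      rw [e0, e2, ← ENNReal.ofReal_mul (Real.exp_pos _).le,
        ← ENNReal.ofReal_mul (by positivity)]
      congr 1
      rw [show β * Real.exp (-(β * t)) * (Real.exp (-t) * Real.exp (-(γ * (s - t))))
          = β * (Real.exp (-(β * t)) * Real.exp (-t)) * Real.exp (-(γ * (s - t))) from by ring,
        ← Real.exp_add]
      congr 2
      ring
    · rw [Set.indicator_of_notMem (by simpa using hts), mul_zero, stmt8_G,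
        Set.indicator_of_notMem (fun hmem => absurd hmem.2 (not_lt.mpr hts))]

private lemma stmt8_Jval {β γ : ℝ} (hβ : 0 < β) (hγ : 0 < γ) :
    ∫⁻ s in Set.Ioi (0:ℝ), ∫⁻ t, stmt8_G β γ s t = ENNReal.ofReal (β / ((β + 1) * γ)) := by
  have hfull : ∫⁻ s in Set.Ioi (0:ℝ), ∫⁻ t, stmt8_G β γ s t = ∫⁻ s, ∫⁻ t, stmt8_G β γ s t := by
    rw [← lintegral_indicator (measurableSet_Ioi (a := (0:ℝ))) (fun s => ∫⁻ t, stmt8_G β γ s t)]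
    refine lintegral_congr fun s => ?_
    rcases lt_or_ge 0 s with hs | hs
    · rw [Set.indicator_of_mem (Set.mem_Ioi.mpr hs)]
    · rw [Set.indicator_of_notMem (by simpa using hs)]
      have : ∀ t, stmt8_G β γ s t = 0 := by
        intro t
        rw [stmt8_G, Set.indicator_of_notMem]
        rintro ⟨ht0, hts⟩
        linarith
      simp [this]
  rw [hfull, lintegral_lintegral_swap (stmt8_Gmeas β γ).aemeasurable]
  have inner : ∀ t : ℝ, ∫⁻ s, stmt8_G β γ s t
      = Set.indicator (Set.Ici 0) (fun t => ENNReal.ofReal (β / γ * Real.exp (-((β+1)*t)))) t := by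
    intro t
    rcases le_or_gt 0 t with ht | ht
    · have e1 : ∀ s, stmt8_G β γ s t = Set.indicator (Set.Ioi t)
          (fun s => ENNReal.ofReal (β * Real.exp (-((β+1)*t)) * Real.exp (γ*t))
            * ENNReal.ofReal (Real.exp (-(γ*s)))) s := by
        intro s
        rcases lt_or_ge t s with hts | hts
        · rw [stmt8_G, Set.indicator_of_mem (Set.mem_Ico.mpr ⟨ht, hts⟩),
            Set.indicator_of_mem (Set.mem_Ioi.mpr hts),
            ← ENNReal.ofReal_mul (by positivity)]
          congr 1
          rw [show β * Real.exp (-((β+1)*t)) * Real.exp (γ*t) * Real.exp (-(γ*s))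
              = β * Real.exp (-((β+1)*t)) * (Real.exp (γ*t) * Real.exp (-(γ*s))) from by ring,
            ← Real.exp_add]
          congr 2
          ring
        · rw [stmt8_G, Set.indicator_of_notMem (fun hm => absurd hm.2 (not_lt.mpr hts)),
            Set.indicator_of_notMem (by simpa using hts)]
      rw [lintegral_congr e1, lintegral_indicator measurableSet_Ioi _]
      rw [lintegral_const_mul _
          (by fun_prop : Measurable fun a : ℝ => ENNReal.ofReal (Real.exp (-(γ*a)))),
        stmt8_L1 hγ t, Set.indicator_of_mem (Set.mem_Ici.mpr ht),
        ← ENNReal.ofReal_mul (by positivity)]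
      congr 1
      rw [show β * Real.exp (-((β+1)*t)) * Real.exp (γ*t) * (Real.exp (-(γ*t)) / γ)
          = β * Real.exp (-((β+1)*t)) * (Real.exp (γ*t) * Real.exp (-(γ*t))) / γ from by ring,
        ← Real.exp_add]
      simp
      ring
    · have e0 : ∀ s, stmt8_G β γ s t = 0 := by
        intro s
        rw [stmt8_G, Set.indicator_of_notMem]
        rintro ⟨ht0, _⟩
        linarith
      rw [Set.indicator_of_notMem (by simpa using ht)]
      simp [e0]
  rw [lintegral_congr inner, lintegral_indicator measurableSet_Ici _,
    ← Measure.restrict_congr_set Ioi_ae_eq_Ici]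
  have : ∀ x ∈ Set.Ioi (0:ℝ), ENNReal.ofReal (β / γ * Real.exp (-((β+1)*x)))
      = ENNReal.ofReal (β / γ) * ENNReal.ofReal (Real.exp (-((β+1)*x))) := by
    intro x _
    rw [← ENNReal.ofReal_mul (by positivity)]
  rw [setLIntegral_congr_fun measurableSet_Ioi this,
    lintegral_const_mul _ (by fun_prop), stmt8_L1 (by positivity : (0:ℝ) < β + 1) 0,
    ← ENNReal.ofReal_mul (by positivity)]
  congr 1
  rw [mul_zero, neg_zero, Real.exp_zero, div_mul_div_comm, mul_one, mul_comm γ]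

end Helpers

theorem stmt_8 {Ω : Type*} [MeasureSpace Ω] [IsProbabilityMeasure (ℙ : Measure Ω)]
    (β γ lam : ℝ) (hβ : 0 < β) (hγ : 0 < γ) (hlam : 0 < lam)
    (C₁ C₂ w : ℕ)
    (f : Fin 3 → Ω → ℝ) (hmeas : ∀ i, Measurable (f i))
    (hindep : iIndepFun f ℙ)
    (h1 : ∀ x : ℝ, 0 ≤ x → ℙ {ω | x < f 0 ω} = ENNReal.ofReal (Real.exp (-x)))
    (h2 : ∀ x : ℝ, 0 ≤ x → ℙ {ω | x < f 1 ω} = ENNReal.ofReal (Real.exp (-β * x)))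
    (h3 : ∀ x : ℝ, 0 ≤ x → ℙ {ω | x < f 2 ω} = ENNReal.ofReal (Real.exp (-γ * x))) :
    lam * ((C₁ : ℝ) * (∫ s in Set.Ioi (0:ℝ), Real.exp (-γ * s))
        + (w : ℝ) * (C₂ : ℝ) * ∫ s in Set.Ioi (0:ℝ),
            (ℙ {ω | f 1 ω < min (f 0 ω) s ∧ s < f 1 ω + f 2 ω}).toReal)
      = lam / γ * ((C₁ : ℝ) + (C₂ : ℝ) * β * (w : ℝ) / (β + 1)) := by
  have hint1 : ∫ s in Set.Ioi (0:ℝ), Real.exp (-γ * s) = 1 / γ := by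
    simp only [neg_mul]
    rw [stmt8_L0 hγ 0, mul_zero, neg_zero, Real.exp_zero]
  have hFmeas : Measurable fun s : ℝ => ∫⁻ t, stmt8_G β γ s t :=
    (stmt8_Gmeas β γ).lintegral_prod_right
  have hint2 : ∫ s in Set.Ioi (0:ℝ),
      (ℙ {ω | f 1 ω < min (f 0 ω) s ∧ s < f 1 ω + f 2 ω}).toReal = β / ((β + 1) * γ) := by
    rw [setIntegral_congr_fun measurableSet_Ioi (fun s hs => by
      rw [stmt8_KEY β γ hβ hγ f hmeas hindep h1 h2 h3 (Set.mem_Ioi.mp hs)])]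
    rw [integral_toReal (hFmeas.aemeasurable.restrict) (ae_lt_top hFmeas (by
      rw [stmt8_Jval hβ hγ]; exact ENNReal.ofReal_ne_top)), stmt8_Jval hβ hγ,
      ENNReal.toReal_ofReal (by positivity)]
  rw [hint1, hint2]
  field_simp
end

section
/- Let A_d ≤ A_r ≤ A_p be real numbers, n > 0 a natural number, μ ≥ 0, and let ω_p, ω_d : [0,∞) → [0,∞) be continuous non-negative functions. Consider the ODE w'(t) = (A_p - w(t))^n ω_p(t) - (w(t) - A_d)^n ω_d(t) - μ (w(t) - A_r). If w is a solution with w(0) ∈ [A_d, A_p], then w(t) ∈ [A_d, A_p] for all t ≥ 0. -/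
open Set Filter Topology

lemma aux_gronwall_zero (n : ℕ) (hn : 0 < n) (s T : ℝ) (hsT : s ≤ T)
    (g gd ω : ℝ → ℝ)
    (hg : ∀ t ∈ Icc s T, HasDerivAt g (gd t) t)
    (hgs : g s = 0) (hgnn : ∀ t ∈ Icc s T, 0 ≤ g t)
    (hω : Continuous ω) (hωnn : ∀ t ∈ Icc s T, 0 ≤ ω t)
    (hbound : ∀ t ∈ Icc s T, gd t ≤ (- g t) ^ n * ω t) :
    g T ≤ 0 := by
  have hgc : ContinuousOn g (Icc s T) := fun t ht =>
    (hg t ht).continuousAt.continuousWithinAt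
  have hcont : ContinuousOn (fun t => (g t) ^ (n - 1) * ω t) (Icc s T) :=
    (hgc.pow _).mul hω.continuousOn
  obtain ⟨t₀, ht₀, hK⟩ :=
    isCompact_Icc.exists_isMaxOn ⟨s, left_mem_Icc.2 hsT⟩ hcont
  set K := (g t₀) ^ (n - 1) * ω t₀ with hKdef
  have key : ∀ t ∈ Icc s T, g t ≤ gronwallBound 0 K 0 (t - s) := by
    apply le_gronwallBound_of_liminf_deriv_right_le hgc
    · intro x hx r hr
      exact ((hg x (Ico_subset_Icc_self hx)).hasDerivWithinAt
        (s := Ici x)).liminf_right_slope_le hr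
    · exact le_of_eq hgs
    · intro x hx
      have hxI : x ∈ Icc s T := Ico_subset_Icc_self hx
      have hgx : 0 ≤ g x := hgnn x hxI
      have hωx : 0 ≤ ω x := hωnn x hxI
      have hpow : (- g x) ^ n ≤ (g x) ^ n := by
        calc (- g x) ^ n ≤ |(- g x) ^ n| := le_abs_self _
          _ = |g x| ^ n := by rw [abs_pow, abs_neg]
          _ = (g x) ^ n := by rw [abs_of_nonneg hgx]
      have h2 : (- g x) ^ n * ω x ≤ K * g x := by
        calc (- g x) ^ n * ω x ≤ (g x) ^ n * ω x :=
              mul_le_mul_of_nonneg_right hpow hωx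
          _ = (g x) ^ (n - 1) * ω x * g x := by
              conv_lhs => rw [← Nat.sub_add_cancel hn, pow_succ]
              ring
          _ ≤ K * g x := mul_le_mul_of_nonneg_right (hK hxI) hgx
      have := hbound x hxI
      linarith
  have := key T (right_mem_Icc.2 hsT)
  rwa [gronwallBound_ε0_δ0] at this

theorem stmt_9 (A_d A_r A_p : ℝ) (h1 : A_d ≤ A_r) (h2 : A_r ≤ A_p)
    (n : ℕ) (hn : 0 < n) (μ : ℝ) (hμ : 0 ≤ μ)
    (ωp ωd : ℝ → ℝ)
    (hcp : Continuous ωp) (hcd : Continuous ωd)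
    (hpnn : ∀ t : ℝ, 0 ≤ t → 0 ≤ ωp t) (hdnn : ∀ t : ℝ, 0 ≤ t → 0 ≤ ωd t)
    (w : ℝ → ℝ)
    (hw : ∀ t : ℝ, 0 ≤ t → HasDerivAt w
      ((A_p - w t) ^ n * ωp t - (w t - A_d) ^ n * ωd t - μ * (w t - A_r)) t)
    (h0 : w 0 ∈ Set.Icc A_d A_p) :
    ∀ t : ℝ, 0 ≤ t → w t ∈ Set.Icc A_d A_p := by
  have hwc : ∀ t : ℝ, 0 ≤ t → ContinuousAt w t := fun t ht => (hw t ht).continuousAt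
  intro T hT
  have hwcOn : ContinuousOn w (Icc 0 T) := fun u hu => (hwc u hu.1).continuousWithinAt
  constructor
  · -- lower bound: A_d ≤ w T
    by_contra hcon
    push_neg at hcon
    set S : Set ℝ := Icc 0 T ∩ w ⁻¹' Ici A_d with hS
    have h0S : (0:ℝ) ∈ S := ⟨left_mem_Icc.2 hT, h0.1⟩
    have hSbdd : BddAbove S := ⟨T, fun u hu => hu.1.2⟩
    have hSc : IsClosed S := hwcOn.preimage_isClosed_of_isClosed isClosed_Icc isClosed_Ici
    set s := sSup S with hs
    have hsS : s ∈ S := hSc.csSup_mem ⟨0, h0S⟩ hSbdd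
    have hsmem : s ∈ Icc 0 T := hsS.1
    have hgt : ∀ u, s < u → u ≤ T → w u < A_d := by
      intro u hsu huT
      by_contra h
      push_neg at h
      exact absurd (le_csSup hSbdd ⟨⟨le_trans hsmem.1 hsu.le, huT⟩, h⟩) (not_le.2 hsu)
    have hsT : s < T := by
      rcases lt_or_eq_of_le hsmem.2 with h | h
      · exact h
      · exact absurd (h ▸ hsS.2) (not_le.2 hcon)
    have hws : w s = A_d := by
      have hle : w s ≤ A_d := by
        have htd : Tendsto w (nhdsWithin s (Ioi s)) (nhds (w s)) :=
          ((hwc s hsmem.1).continuousWithinAt).tendsto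
        have hev : ∀ᶠ u in nhdsWithin s (Ioi s), w u ≤ A_d := by
          filter_upwards [Ioo_mem_nhdsGT_of_mem ⟨le_refl s, hsT⟩] with u hu
          exact (hgt u hu.1 hu.2.le).le
        exact le_of_tendsto htd hev
      exact le_antisymm hle hsS.2
    have hfin := aux_gronwall_zero n hn s T hsT.le (fun t => A_d - w t)
      (fun t => -((A_p - w t) ^ n * ωp t - (w t - A_d) ^ n * ωd t - μ * (w t - A_r)))
      ωd
      (fun t ht => ((hw t (le_trans hsmem.1 ht.1)).const_sub A_d))
      (by simp [hws])
      (fun t ht => by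
        show (0:ℝ) ≤ A_d - w t
        rcases eq_or_lt_of_le ht.1 with h | h
        · simp [← h, hws]
        · linarith [hgt t h ht.2])
      hcd
      (fun t ht => hdnn t (le_trans hsmem.1 ht.1))
      (fun t ht => by
        have ht0 : (0:ℝ) ≤ t := le_trans hsmem.1 ht.1
        have hwt : w t ≤ A_d := by
          rcases eq_or_lt_of_le ht.1 with h | h
          · rw [← h, hws]
          · exact (hgt t h ht.2).le
        have e1 : (0:ℝ) ≤ (A_p - w t) ^ n * ωp t := by
          have h' : 0 ≤ A_p - w t := by linarith
          exact mul_nonneg (pow_nonneg h' n) (hpnn t ht0)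
        have e2 : (0:ℝ) ≤ μ * (A_r - w t) := by
          have h' : 0 ≤ A_r - w t := by linarith
          positivity
        show -((A_p - w t) ^ n * ωp t - (w t - A_d) ^ n * ωd t - μ * (w t - A_r)) ≤
          (-(A_d - w t)) ^ n * ωd t
        have e3 : (-(A_d - w t)) ^ n = (w t - A_d) ^ n := by ring_nf
        rw [e3]
        linarith)
    have hfin' : A_d - w T ≤ 0 := hfin
    linarith
  · -- upper bound: w T ≤ A_p
    by_contra hcon
    push_neg at hcon
    set S : Set ℝ := Icc 0 T ∩ w ⁻¹' Iic A_p with hS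
    have h0S : (0:ℝ) ∈ S := ⟨left_mem_Icc.2 hT, h0.2⟩
    have hSbdd : BddAbove S := ⟨T, fun u hu => hu.1.2⟩
    have hSc : IsClosed S := hwcOn.preimage_isClosed_of_isClosed isClosed_Icc isClosed_Iic
    set s := sSup S with hs
    have hsS : s ∈ S := hSc.csSup_mem ⟨0, h0S⟩ hSbdd
    have hsmem : s ∈ Icc 0 T := hsS.1
    have hgt : ∀ u, s < u → u ≤ T → A_p < w u := by
      intro u hsu huT
      by_contra h
      push_neg at h
      exact absurd (le_csSup hSbdd ⟨⟨le_trans hsmem.1 hsu.le, huT⟩, h⟩) (not_le.2 hsu)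
    have hsT : s < T := by
      rcases lt_or_eq_of_le hsmem.2 with h | h
      · exact h
      · exact absurd (h ▸ hsS.2) (not_le.2 hcon)
    have hws : w s = A_p := by
      have hge : A_p ≤ w s := by
        have htd : Tendsto w (nhdsWithin s (Ioi s)) (nhds (w s)) :=
          ((hwc s hsmem.1).continuousWithinAt).tendsto
        have hev : ∀ᶠ u in nhdsWithin s (Ioi s), A_p ≤ w u := by
          filter_upwards [Ioo_mem_nhdsGT_of_mem ⟨le_refl s, hsT⟩] with u hu
          exact (hgt u hu.1 hu.2.le).le
        exact ge_of_tendsto htd hev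
      exact le_antisymm hsS.2 hge
    have hfin := aux_gronwall_zero n hn s T hsT.le (fun t => w t - A_p)
      (fun t => (A_p - w t) ^ n * ωp t - (w t - A_d) ^ n * ωd t - μ * (w t - A_r))
      ωp
      (fun t ht => ((hw t (le_trans hsmem.1 ht.1)).sub_const A_p))
      (by simp [hws])
      (fun t ht => by
        show (0:ℝ) ≤ w t - A_p
        rcases eq_or_lt_of_le ht.1 with h | h
        · simp [← h, hws]
        · linarith [hgt t h ht.2])
      hcp
      (fun t ht => hpnn t (le_trans hsmem.1 ht.1))
      (fun t ht => by
        have ht0 : (0:ℝ) ≤ t := le_trans hsmem.1 ht.1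
        have hwt : A_p ≤ w t := by
          rcases eq_or_lt_of_le ht.1 with h | h
          · rw [← h, hws]
          · exact (hgt t h ht.2).le
        have e1 : (0:ℝ) ≤ (w t - A_d) ^ n * ωd t := by
          have h' : 0 ≤ w t - A_d := by linarith
          exact mul_nonneg (pow_nonneg h' n) (hdnn t ht0)
        have e2 : (0:ℝ) ≤ μ * (w t - A_r) := by
          have h' : 0 ≤ w t - A_r := by linarith
          positivity
        show (A_p - w t) ^ n * ωp t - (w t - A_d) ^ n * ωd t - μ * (w t - A_r) ≤
          (-(w t - A_p)) ^ n * ωp t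
        have e3 : (-(w t - A_p)) ^ n = (A_p - w t) ^ n := by ring_nf
        rw [e3]
        linarith)
    have hfin' : w T - A_p ≤ 0 := hfin
    linarith
end

section
/- Consider the transition-rate matrix Q on ℕ^{1+ℓ} given by q((x,z),(x-1,z)) = x, q((x,z),(x, z + k₀(z))) = 1, q((x,z),(x+w, z + k₁(z))) = λ, q((x,z),(x-1, z + k₂(z))) = βx for x ≥ 1, and q((x,z),(x, z - e_i)) = γ_i z_i, where the coordinates of k₀, k₁, k₂ : ℕ^ℓ → ℕ^ℓ are bounded by C_k, all γ_i > 0, λ, β > 0, w ∈ ℕ. Let f(x,z) = x + η(z₁ + … + z_ℓ) with 0 < η < 1/(ℓ C_k). Then there exist constants δ > 0 and D ≥ 0 (depending on the parameters) such that Q(f)(x,z) ≤ -δ · f(x,z) + D for all (x,z) ∈ ℕ^{1+ℓ}; in particular there exist δ' > 0 and K such that Q(f)(x,z) ≤ -δ' whenever f(x,z) > K. -/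
/-- The Lyapunov function `f(x,z) = x + η (z₁ + … + z_ℓ)`. -/
noncomputable def driftV (ℓ : ℕ) (η : ℝ) (x : ℕ) (z : Fin ℓ → ℕ) : ℝ :=
  (x : ℝ) + η * ∑ i, (z i : ℝ)

/-- The generator of the discrete fast process applied to the Lyapunov function:
`Q(f)(x,z) = Σ_{(x',z')} q((x,z),(x',z')) (f(x',z') - f(x,z))`. -/
noncomputable def Qdrift (ℓ : ℕ) (η lam β : ℝ) (w : ℕ) (γ : Fin ℓ → ℝ)
    (k₀ k₁ k₂ : (Fin ℓ → ℕ) → (Fin ℓ → ℕ)) (x : ℕ) (z : Fin ℓ → ℕ) : ℝ :=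
  (x : ℝ) * (driftV ℓ η (x - 1) z - driftV ℓ η x z)
  + (driftV ℓ η x (fun i => z i + k₀ z i) - driftV ℓ η x z)
  + lam * (driftV ℓ η (x + w) (fun i => z i + k₁ z i) - driftV ℓ η x z)
  + β * (x : ℝ) * (driftV ℓ η (x - 1) (fun i => z i + k₂ z i) - driftV ℓ η x z)
  + ∑ i, γ i * (z i : ℝ) *
      (driftV ℓ η x (fun j => z j - if j = i then 1 else 0) - driftV ℓ η x z)

private lemma cast_pred_mul (x : ℕ) (c : ℝ) :
    (x : ℝ) * (((x - 1 : ℕ) : ℝ) + c - ((x : ℝ) + c)) = -(x : ℝ) := by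
  cases x with
  | zero => simp
  | succ n => push_cast [Nat.succ_sub_one]; ring

private lemma sum_sub_ite (ℓ : ℕ) (z : Fin ℓ → ℕ) (i : Fin ℓ) :
    (∑ j, ((z j - if j = i then 1 else 0 : ℕ) : ℝ))
      = (∑ j, (z j : ℝ)) + (((z i - 1 : ℕ) : ℝ) - (z i : ℝ)) := by
  rw [← Finset.add_sum_erase _ (fun j => ((z j - if j = i then 1 else 0 : ℕ) : ℝ))
      (Finset.mem_univ i),
    ← Finset.add_sum_erase _ (fun j => ((z j : ℕ) : ℝ)) (Finset.mem_univ i)]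
  have h : ∀ j ∈ Finset.univ.erase i,
      ((z j - if j = i then 1 else 0 : ℕ) : ℝ) = (z j : ℝ) := by
    intro j hj
    simp [Finset.ne_of_mem_erase hj]
  rw [Finset.sum_congr rfl h]
  simp only [if_pos rfl, if_true]
  ring

private lemma gamma_term (ℓ : ℕ) (η : ℝ) (γ : Fin ℓ → ℝ) (z : Fin ℓ → ℕ) (i : Fin ℓ) :
    γ i * (z i : ℝ) * (η * (((z i - 1 : ℕ) : ℝ) - (z i : ℝ)))
      = -(η * (γ i * (z i : ℝ))) := by
  cases h : z i with
  | zero => simp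
  | succ n => push_cast [Nat.succ_sub_one]; ring

theorem stmt_13 (ℓ : ℕ) (hℓ : 0 < ℓ) (k₀ k₁ k₂ : (Fin ℓ → ℕ) → (Fin ℓ → ℕ))
    (C_k : ℝ) (hCk : 0 < C_k)
    (hk₀ : ∀ z i, (k₀ z i : ℝ) ≤ C_k) (hk₁ : ∀ z i, (k₁ z i : ℝ) ≤ C_k)
    (hk₂ : ∀ z i, (k₂ z i : ℝ) ≤ C_k)
    (γ : Fin ℓ → ℝ) (hγ : ∀ i, 0 < γ i)
    (lam β : ℝ) (hlam : 0 < lam) (hβ : 0 < β) (w : ℕ)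
    (η : ℝ) (hη0 : 0 < η) (hη : η < 1 / (ℓ * C_k)) :
    (∃ δ : ℝ, 0 < δ ∧ ∃ D : ℝ, 0 ≤ D ∧ ∀ (x : ℕ) (z : Fin ℓ → ℕ),
        Qdrift ℓ η lam β w γ k₀ k₁ k₂ x z ≤ -δ * driftV ℓ η x z + D)
    ∧ ∃ δ' : ℝ, 0 < δ' ∧ ∃ K : ℝ, ∀ (x : ℕ) (z : Fin ℓ → ℕ),
        K < driftV ℓ η x z → Qdrift ℓ η lam β w γ k₀ k₁ k₂ x z ≤ -δ' := by
  haveI : Nonempty (Fin ℓ) := ⟨⟨0, hℓ⟩⟩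
  have hne : (Finset.univ : Finset (Fin ℓ)).Nonempty := Finset.univ_nonempty
  obtain ⟨g, hg_def⟩ : ∃ g : ℝ, g = Finset.univ.inf' hne γ := ⟨_, rfl⟩
  have hg : 0 < g := by
    rw [hg_def, Finset.lt_inf'_iff]
    exact fun i _ => hγ i
  have hg_le : ∀ i, g ≤ γ i := fun i => hg_def ▸ Finset.inf'_le _ (Finset.mem_univ i)
  have hℓC : (0 : ℝ) < (ℓ : ℝ) * C_k := by
    have : (0 : ℝ) < (ℓ : ℝ) := by exact_mod_cast hℓ
    positivity
  have hηℓC : η * ((ℓ : ℝ) * C_k) < 1 := by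
    rw [lt_div_iff₀ hℓC] at hη
    linarith
  obtain ⟨δ, hδ_def⟩ : ∃ δ : ℝ, δ = min 1 g := ⟨_, rfl⟩
  have hδ : 0 < δ := hδ_def ▸ lt_min one_pos hg
  obtain ⟨D, hD_def⟩ : ∃ D : ℝ,
      D = η * ((ℓ : ℝ) * C_k) + lam * ((w : ℝ) + η * ((ℓ : ℝ) * C_k)) := ⟨_, rfl⟩
  have hD : 0 ≤ D := by
    have h1 : (0 : ℝ) ≤ η * ((ℓ : ℝ) * C_k) := by positivity
    have h2 : (0 : ℝ) ≤ (w : ℝ) := Nat.cast_nonneg w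
    rw [hD_def]; nlinarith
  -- sum bounds
  have sum_le : ∀ (k : (Fin ℓ → ℕ) → (Fin ℓ → ℕ)), (∀ z i, (k z i : ℝ) ≤ C_k) →
      ∀ z : Fin ℓ → ℕ, (∑ i, (k z i : ℝ)) ≤ (ℓ : ℝ) * C_k := by
    intro k hk z
    calc (∑ i, (k z i : ℝ)) ≤ ∑ _i : Fin ℓ, C_k := Finset.sum_le_sum fun i _ => hk z i
      _ = (ℓ : ℝ) * C_k := by simp [mul_comm]
  -- main pointwise bound
  have main : ∀ (x : ℕ) (z : Fin ℓ → ℕ),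
      Qdrift ℓ η lam β w γ k₀ k₁ k₂ x z ≤ -δ * driftV ℓ η x z + D := by
    intro x z
    have hQ : Qdrift ℓ η lam β w γ k₀ k₁ k₂ x z
        = -(x : ℝ) + η * (∑ i, (k₀ z i : ℝ))
          + lam * ((w : ℝ) + η * (∑ i, (k₁ z i : ℝ)))
          + β * (x : ℝ) * (η * (∑ i, (k₂ z i : ℝ)) - 1)
          - η * (∑ i, γ i * (z i : ℝ)) := by
      unfold Qdrift driftV
      have h1 : (x : ℝ) * (((x - 1 : ℕ) : ℝ) + η * ∑ i, (z i : ℝ)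
          - ((x : ℝ) + η * ∑ i, (z i : ℝ))) = -(x : ℝ) := cast_pred_mul x _
      have h4 : β * (x : ℝ) * (((x - 1 : ℕ) : ℝ) + η * ∑ i, ((z i + k₂ z i : ℕ) : ℝ)
          - ((x : ℝ) + η * ∑ i, (z i : ℝ)))
          = β * (x : ℝ) * (η * (∑ i, (k₂ z i : ℝ)) - 1) := by
        cases x with
        | zero => simp
        | succ n =>
          push_cast [Nat.succ_sub_one, Finset.sum_add_distrib]
          ring
      have h5 : (∑ i, γ i * (z i : ℝ) *
          (((x : ℝ) + η * ∑ j, ((z j - if j = i then 1 else 0 : ℕ) : ℝ))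
            - ((x : ℝ) + η * ∑ j, (z j : ℝ))))
          = -(η * ∑ i, γ i * (z i : ℝ)) := by
        calc (∑ i, γ i * (z i : ℝ) *
            (((x : ℝ) + η * ∑ j, ((z j - if j = i then 1 else 0 : ℕ) : ℝ))
              - ((x : ℝ) + η * ∑ j, (z j : ℝ))))
            = ∑ i, -(η * (γ i * (z i : ℝ))) := by
              refine Finset.sum_congr rfl fun i _ => ?_
              rw [sum_sub_ite ℓ z i, ← gamma_term ℓ η γ z i]
              ring
          _ = -(η * ∑ i, γ i * (z i : ℝ)) := by
              rw [Finset.sum_neg_distrib, ← Finset.mul_sum]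
      rw [h1, h4, h5]
      push_cast [Finset.sum_add_distrib]
      ring
    rw [hQ]
    have b0 : η * (∑ i, (k₀ z i : ℝ)) ≤ η * ((ℓ : ℝ) * C_k) :=
      mul_le_mul_of_nonneg_left (sum_le k₀ hk₀ z) hη0.le
    have b1 : lam * ((w : ℝ) + η * (∑ i, (k₁ z i : ℝ)))
        ≤ lam * ((w : ℝ) + η * ((ℓ : ℝ) * C_k)) := by
      have := mul_le_mul_of_nonneg_left (sum_le k₁ hk₁ z) hη0.le
      nlinarith
    have hx : (0 : ℝ) ≤ (x : ℝ) := Nat.cast_nonneg x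
    have b2 : β * (x : ℝ) * (η * (∑ i, (k₂ z i : ℝ)) - 1) ≤ 0 := by
      have h := mul_le_mul_of_nonneg_left (sum_le k₂ hk₂ z) hη0.le
      have h1 : η * (∑ i, (k₂ z i : ℝ)) - 1 ≤ 0 := by linarith
      exact mul_nonpos_of_nonneg_of_nonpos (mul_nonneg hβ.le hx) h1
    have b3 : g * (∑ i, (z i : ℝ)) ≤ ∑ i, γ i * (z i : ℝ) := by
      rw [Finset.mul_sum]
      exact Finset.sum_le_sum fun i _ =>
        mul_le_mul_of_nonneg_right (hg_le i) (Nat.cast_nonneg _)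
    have hδ1 : δ ≤ 1 := hδ_def ▸ min_le_left _ _
    have hδg : δ ≤ g := hδ_def ▸ min_le_right _ _
    have hS : (0 : ℝ) ≤ ∑ i, (z i : ℝ) :=
      Finset.sum_nonneg fun i _ => Nat.cast_nonneg _
    have bx : -(x : ℝ) ≤ -δ * (x : ℝ) := by nlinarith
    have bz : -(η * (∑ i, γ i * (z i : ℝ))) ≤ -δ * (η * ∑ i, (z i : ℝ)) := by
      have h1 : δ * (∑ i, (z i : ℝ)) ≤ ∑ i, γ i * (z i : ℝ) := by nlinarith
      nlinarith
    have expand : -δ * driftV ℓ η x z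
        = -δ * (x : ℝ) + -δ * (η * ∑ i, (z i : ℝ)) := by
      unfold driftV; ring
    rw [expand, hD_def]
    linarith
  refine ⟨⟨δ, hδ, D, hD, main⟩, δ, hδ, (D + δ) / δ, fun x z hK => ?_⟩
  have h := main x z
  have h2 : -δ * driftV ℓ η x z < -δ * ((D + δ) / δ) := by
    have := mul_lt_mul_of_pos_left hK hδ
    linarith
  have heq : -δ * ((D + δ) / δ) = -(D + δ) := by
    field_simp
  linarith
end
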